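/- Let α be a real constant with α(α−3)(2α−3) ≠ 0, set m := (2α³−9α²+9α)^{1/3} (real cube root) and s := (3α²−9α+9)/m², and take f(x,u,p,q) = α·q²/p on the open set {p > 0, q ≠ 0}. Then: (i) a₁(x,u,p) = p^{α/3−1} satisfies D̂ₓa₁ = J₃I₅a₁, (a₁)_u = −Q·a₁, (a₁)_p = (I₄I₅ − I₇/J₃)a₁, (a₁)_q = 0; (ii) φ(x,u,p) = −(m/3)·ln p satisfies D̂ₓφ = −J₃, φ_u = −I₇, φ_p = −I₄; (iii) with χ(x,u,p) = ((αpx − αu + 3u)/m)·p^{α/3−1}, ψ(x,u,p) = (u − xp)·p^{α/3−1}, η := D̂ₓχ/D̂ₓφ and f̄ := s·χ + ψ, one has D̂ₓη = −J₃f̄, η_u = ((s+I₅²)/2 + I₂/(2J₃²))a₁ − I₇f̄, η_p = (I₅/J₃ + I₁/(3J₃²))a₁ − I₄f̄, η_q = a₁/J₃², D̂ₓχ = −J₃η, χ_u = −I₅a₁ − I₇η, χ_p = −a₁/J₃ − I₄η, I₇D̂ₓψ = J₃(ψ_u − a₁), ψ_x = χφ_x − p·a₁, and ψ_p = −I₄χ.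 -/

import Mathlib

/-!
Invariants of the third-order ODE `u''' = f(x, u, u', u'')` under contact
transformations, following Cartan's equivalence method.
We write `p = u'`, `q = u''`.
-/

noncomputable section

/-- The real cube root of a real number. -/
def cbrt (y : ℝ) : ℝ := if 0 ≤ y then y ^ ((1 : ℝ)/3) else -((-y) ^ ((1 : ℝ)/3))

/-- Functions of `(x, u, p, q)`. -/
abbrev Fn : Type := ℝ → ℝ → ℝ → ℝ → ℝ

/-- Functions of `(x, u, p)`. -/
abbrev Fn3 : Type := ℝ → ℝ → ℝ → ℝ

/-- Partial derivative in `x` of a function of `(x,u,p,q)`. -/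
def pdx (g : Fn) : Fn := fun x u p q => deriv (fun t => g t u p q) x
/-- Partial derivative in `u` of a function of `(x,u,p,q)`. -/
def pdu (g : Fn) : Fn := fun x u p q => deriv (fun t => g x t p q) u
/-- Partial derivative in `p` of a function of `(x,u,p,q)`. -/
def pdp (g : Fn) : Fn := fun x u p q => deriv (fun t => g x u t q) p
/-- Partial derivative in `q` of a function of `(x,u,p,q)`. -/
def pdq (g : Fn) : Fn := fun x u p q => deriv (fun t => g x u p t) q

/-- Partial derivative in `x` of a function of `(x,u,p)`. -/
def pdx3 (g : Fn3) : Fn3 := fun x u p => deriv (fun t => g t u p) x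
/-- Partial derivative in `u` of a function of `(x,u,p)`. -/
def pdu3 (g : Fn3) : Fn3 := fun x u p => deriv (fun t => g x t p) u
/-- Partial derivative in `p` of a function of `(x,u,p)`. -/
def pdp3 (g : Fn3) : Fn3 := fun x u p => deriv (fun t => g x u t) p

/-- Lift of a function of `(x,u,p)` to a function of `(x,u,p,q)`, constant in `q`. -/
def lift (g : Fn3) : Fn := fun x u p _ => g x u p

/-- The total derivative operator `D̂ₓ = ∂ₓ + p ∂ᵤ + q ∂ₚ + f ∂_q` of the ODE `u''' = f`. -/
def Dhat (f g : Fn) : Fn := fun x u p q =>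
  pdx g x u p q + p * pdu g x u p q + q * pdp g x u p q + f x u p q * pdq g x u p q

/-- `I₁ = −f_q`. -/
def I1 (f : Fn) : Fn := fun x u p q => -(pdq f x u p q)

/-- `I₂ = −(2/9)I₁² − f_p − (1/3)D̂ₓI₁`. -/
def I2 (f : Fn) : Fn := fun x u p q =>
  -(2/9) * (I1 f x u p q)^2 - pdp f x u p q - (1/3) * Dhat f (I1 f) x u p q

/-- `I₃ = −(1/3)I₁I₂ − f_u − (1/2)D̂ₓI₂`. -/
def I3 (f : Fn) : Fn := fun x u p q =>
  -(1/3) * I1 f x u p q * I2 f x u p q - pdu f x u p q - (1/2) * Dhat f (I2 f) x u p q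

/-- `J₃`, the real cube root of `I₃`. -/
def J3 (f : Fn) : Fn := fun x u p q => cbrt (I3 f x u p q)

/-- `I₄ = (J₃)_q`. -/
def I4 (f : Fn) : Fn := pdq (J3 f)

/-- `I₅ = (1/(3J₃²))(I₁J₃ + 3D̂ₓJ₃)`. -/
def I5 (f : Fn) : Fn := fun x u p q =>
  (1 / (3 * (J3 f x u p q)^2)) * (I1 f x u p q * J3 f x u p q + 3 * Dhat f (J3 f) x u p q)

/-- `I₇ = −(I₅)_q J₃²`. -/
def I7 (f : Fn) : Fn := fun x u p q => -(pdq (I5 f) x u p q) * (J3 f x u p q)^2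

/-- `I₉ = 2J₃D̂ₓI₅ − I₂ + J₃²I₅²`. -/
def I9 (f : Fn) : Fn := fun x u p q =>
  2 * J3 f x u p q * Dhat f (I5 f) x u p q - I2 f x u p q
    + (J3 f x u p q)^2 * (I5 f x u p q)^2

/-- `K = I₉/J₃²`. -/
def Kinv (f : Fn) : Fn := fun x u p q => I9 f x u p q / (J3 f x u p q)^2

/-- `Q = −(I₁I₇ + 3J₃²(I₅)_p + 3(J₃)_u − 3J₃I₄D̂ₓI₅)/(3J₃)`. -/
def Qinv (f : Fn) : Fn := fun x u p q =>
  -(I1 f x u p q * I7 f x u p q + 3 * (J3 f x u p q)^2 * pdp (I5 f) x u p q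
      + 3 * pdu (J3 f) x u p q
      - 3 * J3 f x u p q * I4 f x u p q * Dhat f (I5 f) x u p q)
    / (3 * J3 f x u p q)

/-- `I₆ = (2/3)(J₃)_q I₁ − (1/3)(I₁)_q J₃ − 2(J₃)_p + 2J₃I₄I₅`. -/
def I6 (f : Fn) : Fn := fun x u p q =>
  (2/3) * pdq (J3 f) x u p q * I1 f x u p q - (1/3) * pdq (I1 f) x u p q * J3 f x u p q
    - 2 * pdp (J3 f) x u p q + 2 * J3 f x u p q * I4 f x u p q * I5 f x u p q

/-- `I₈ = (I₄)_q`. -/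
def I8 (f : Fn) : Fn := pdq (I4 f)

/-- `I₁₀ = I₄D̂ₓI₇ − J₃(I₇)_p + J₃²(I₄/J₃)_u`. -/
def I10 (f : Fn) : Fn := fun x u p q =>
  I4 f x u p q * Dhat f (I7 f) x u p q - J3 f x u p q * pdp (I7 f) x u p q
    + (J3 f x u p q)^2 *
      pdu (fun x' u' p' q' => I4 f x' u' p' q' / J3 f x' u' p' q') x u p q

/-- `I₁₁ = (J₃)_u − D̂ₓI₇`. -/
def I11 (f : Fn) : Fn := fun x u p q =>
  pdu (J3 f) x u p q - Dhat f (I7 f) x u p q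

/-- `I₁₂`. -/
def I12 (f : Fn) : Fn := fun x u p q =>
  6 * I1 f x u p q * J3 f x u p q *
      (I5 f x u p q * I7 f x u p q - I4 f x u p q * Dhat f (I5 f) x u p q)
    - 18 * (J3 f x u p q)^3 * I4 f x u p q
    + 6 * pdp (I5 f) x u p q * I1 f x u p q * (J3 f x u p q)^2
    - 18 * I2 f x u p q * J3 f x u p q * I4 f x u p q * I5 f x u p q
    - 18 * J3 f x u p q * I7 f x u p q * Dhat f (I5 f) x u p q
    + 18 * (J3 f x u p q)^2 * pdu (I5 f) x u p q
    + 18 * I2 f x u p q * Dhat f (I4 f) x u p q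
    + 2 * (I1 f x u p q)^2 * I7 f x u p q
    - 9 * pdp (I2 f) x u p q * J3 f x u p q
    + 6 * (J3 f x u p q)^2 *
        pdu (fun x' u' p' q' => I1 f x' u' p' q' / J3 f x' u' p' q') x u p q
    + 36 * I2 f x u p q * I7 f x u p q

/-- `I₁₃ = (J₃I₄I₅ − I₇)D̂ₓK + J₃K_u − J₃²I₅K_p`. -/
def I13 (f : Fn) : Fn := fun x u p q =>
  (J3 f x u p q * I4 f x u p q * I5 f x u p q - I7 f x u p q) * Dhat f (Kinv f) x u p q
    + J3 f x u p q * pdu (Kinv f) x u p q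
    - (J3 f x u p q)^2 * I5 f x u p q * pdp (Kinv f) x u p q

/-- `I₁₄ = K_q`. -/
def I14 (f : Fn) : Fn := pdq (Kinv f)

/-- `I₁₅ = I₄D̂ₓK − J₃K_p`. -/
def I15 (f : Fn) : Fn := fun x u p q =>
  I4 f x u p q * Dhat f (Kinv f) x u p q - J3 f x u p q * pdp (Kinv f) x u p q



lemma cbrt_cube (t : ℝ) : cbrt (t ^ 3) = t := by
  have key : ∀ s : ℝ, 0 ≤ s → (s ^ 3) ^ ((1:ℝ)/3) = s := by
    intro s hs
    rw [← Real.rpow_natCast s 3, ← Real.rpow_mul hs]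
    norm_num
  rcases le_or_gt 0 t with ht | ht
  · rw [cbrt, if_pos (by positivity), key t ht]
  · have h3 : t ^ 3 < 0 := Odd.pow_neg ⟨1, by norm_num⟩ ht
    rw [cbrt, if_neg (not_le.mpr h3),
      show -(t^3) = (-t)^3 by ring, key (-t) (by linarith)]
    ring

lemma deriv_congr {g h : ℝ → ℝ} {x : ℝ} (hgh : ∀ t, g t = h t) :
    deriv g x = deriv h x := by rw [show g = h from funext hgh]

lemma deriv_congr_ne {g h : ℝ → ℝ} {x : ℝ} (hx : x ≠ 0)
    (hgh : ∀ t, t ≠ 0 → g t = h t) : deriv g x = deriv h x :=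
  Filter.EventuallyEq.deriv_eq <| (eventually_ne_nhds hx).mono fun t ht => hgh t ht

lemma deriv_congr_pos {g h : ℝ → ℝ} {x : ℝ} (hx : 0 < x)
    (hgh : ∀ t, 0 < t → g t = h t) : deriv g x = deriv h x :=
  Filter.EventuallyEq.deriv_eq <| (eventually_gt_nhds hx).mono fun t ht => hgh t ht

lemma deriv_affine (a b x : ℝ) : deriv (fun t => a * t + b) x = a := by
  simpa using (((hasDerivAt_id x).const_mul a).add_const b).deriv

lemma deriv_sq (a b x : ℝ) : deriv (fun t => a * t ^ 2 + b) x = 2 * a * x := by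
  have := (((hasDerivAt_pow 2 x).const_mul a).add_const b).deriv
  rw [this]; push_cast; ring

lemma deriv_div1 (a b x : ℝ) (hx : x ≠ 0) :
    deriv (fun t => a / t + b) x = -(a / x ^ 2) := by
  have := (((hasDerivAt_inv hx).const_mul a).add_const b).deriv
  simp only [div_eq_mul_inv] at *
  rw [this]; ring

lemma deriv_div2 (a b x : ℝ) (hx : x ≠ 0) :
    deriv (fun t => a / t ^ 2 + b) x = -(2 * a / x ^ 3) := by
  have h := (((hasDerivAt_const x a).div (hasDerivAt_pow 2 x) (pow_ne_zero 2 hx)).add_const b).deriv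
  rw [show (fun t => a / t ^ 2 + b) = (fun y => (((fun _ : ℝ => a) / fun z : ℝ => z ^ 2) y : ℝ) + b) from rfl, h]
  push_cast; field_simp; ring

lemma deriv_pq (a b d c x : ℝ) (hx : x ≠ 0) :
    deriv (fun t => (a * t ^ 2 + b * t + d) * t ^ c) x
      = (2 * a * x + b) * x ^ c + (a * x ^ 2 + b * x + d) * (c * x ^ (c - 1)) := by
  have h1 : HasDerivAt (fun t : ℝ => a * t ^ 2 + b * t + d)
      (a * ((2:ℕ) * x ^ (2 - 1)) + b * 1) x :=
    (((hasDerivAt_pow 2 x).const_mul a).add ((hasDerivAt_id x).const_mul b)).add_const d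
  have h2 : HasDerivAt (fun t : ℝ => t ^ c) (c * x ^ (c - 1)) x :=
    Real.hasDerivAt_rpow_const (Or.inl hx)
  rw [show (fun t => (a * t ^ 2 + b * t + d) * t ^ c)
      = ((fun t : ℝ => a * t ^ 2 + b * t + d) * fun t : ℝ => t ^ c) from rfl,
    (h1.mul h2).deriv]; push_cast; ring

lemma deriv_rpow' (a c x : ℝ) (hx : x ≠ 0) :
    deriv (fun t => a * t ^ c) x = a * (c * x ^ (c - 1)) :=
  ((Real.hasDerivAt_rpow_const (p := c) (Or.inl hx)).const_mul a).deriv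

lemma deriv_log' (a x : ℝ) (hx : x ≠ 0) :
    deriv (fun t => a * Real.log t) x = a / x := by
  have := ((Real.hasDerivAt_log hx).const_mul a).deriv
  rw [this]; ring

lemma cube_cbrt (y : ℝ) : cbrt y ^ 3 = y := by
  rcases le_or_gt 0 y with hy | hy
  · rw [cbrt, if_pos hy, ← Real.rpow_natCast (y ^ ((1:ℝ)/3)) 3, ← Real.rpow_mul hy]
    norm_num
  · rw [cbrt, if_neg (not_le.mpr hy)]
    have h : ((-y) ^ ((1:ℝ)/3)) ^ (3:ℕ) = -y := by
      rw [← Real.rpow_natCast ((-y) ^ ((1:ℝ)/3)) 3, ← Real.rpow_mul (by linarith)]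
      norm_num
    have : (-((-y) ^ ((1:ℝ)/3))) ^ (3:ℕ) = -((-y) ^ ((1:ℝ)/3)) ^ (3:ℕ) := by ring
    rw [this, h]; ring

section invariants

variable (α m : ℝ)

lemma Dhat_lift (f : Fn) (g : Fn3) (x u p q : ℝ) :
    Dhat f (lift g) x u p q
      = pdx3 g x u p + p * pdu3 g x u p + q * pdp3 g x u p := by
  simp [Dhat, lift, pdx, pdu, pdp, pdq, pdx3, pdu3, pdp3]

lemma fI1 (x u p q : ℝ) :
    I1 (fun _ _ p q => α * q^2 / p) x u p q = -(2*α*q/p) := by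
  simp only [I1, pdq]
  rw [show (fun t => α * t ^ 2 / p) = (fun t : ℝ => (α/p) * t^2 + 0) from
    funext fun t => by ring, deriv_sq]
  ring

lemma dhatI1 {p : ℝ} (hp : p ≠ 0) (x u q : ℝ) :
    Dhat (fun _ _ p q => α * q^2 / p) (I1 (fun _ _ p q => α * q^2 / p)) x u p q
      = 2*α*(1-α)*q^2/p^2 := by
  have hx : pdx (I1 (fun _ _ p q => α * q^2 / p)) x u p q = 0 := by
    unfold pdx
    rw [deriv_congr (fun t => fI1 α t u p q)]
    exact deriv_const _ _
  have hu : pdu (I1 (fun _ _ p q => α * q^2 / p)) x u p q = 0 := by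
    unfold pdu
    rw [deriv_congr (fun t => fI1 α x t p q)]
    exact deriv_const _ _
  have hpd : pdp (I1 (fun _ _ p q => α * q^2 / p)) x u p q = 2*α*q/p^2 := by
    unfold pdp
    rw [deriv_congr (fun t => fI1 α x u t q),
      show (fun t : ℝ => -(2*α*q/t)) = (fun t : ℝ => (-(2*α*q))/t + 0) from
        funext fun t => by ring, deriv_div1 _ _ _ hp]
    ring
  have hqd : pdq (I1 (fun _ _ p q => α * q^2 / p)) x u p q = -(2*α/p) := by
    unfold pdq
    rw [deriv_congr (fun t => fI1 α x u p t),
      show (fun t : ℝ => -(2*α*t/p)) = (fun t : ℝ => (-(2*α/p))*t + 0) from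
        funext fun t => by ring, deriv_affine]
  simp only [Dhat, hx, hu, hpd, hqd]
  field_simp
  ring

lemma fI2 {p : ℝ} (hp : p ≠ 0) (x u q : ℝ) :
    I2 (fun _ _ p q => α * q^2 / p) x u p q = -(α*(2*α-3)*q^2/(9*p^2)) := by
  have hpf : pdp (fun _ _ p q => α * q^2 / p : Fn) x u p q = -(α*q^2/p^2) := by
    simp only [pdp]
    rw [show (fun t => α * q ^ 2 / t) = (fun t : ℝ => (α*q^2)/t + 0) from
      funext fun t => by ring, deriv_div1 _ _ _ hp]
  simp only [I2]
  rw [fI1, hpf, dhatI1 α hp]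
  field_simp
  ring

lemma dhatI2 {p : ℝ} (hp : p ≠ 0) (x u q : ℝ) :
    Dhat (fun _ _ p q => α * q^2 / p) (I2 (fun _ _ p q => α * q^2 / p)) x u p q
      = -(2*α*(2*α-3)*(α-1)*q^3/(9*p^3)) := by
  have hx : pdx (I2 (fun _ _ p q => α * q^2 / p)) x u p q = 0 := by
    unfold pdx
    rw [deriv_congr (fun t => fI2 α hp t u q)]
    exact deriv_const _ _
  have hu : pdu (I2 (fun _ _ p q => α * q^2 / p)) x u p q = 0 := by
    unfold pdu
    rw [deriv_congr (fun t => fI2 α hp x t q)]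
    exact deriv_const _ _
  have hpd : pdp (I2 (fun _ _ p q => α * q^2 / p)) x u p q
      = 2*α*(2*α-3)*q^2/(9*p^3) := by
    unfold pdp
    rw [deriv_congr_ne hp (fun t ht => fI2 α ht x u q),
      show (fun t : ℝ => -(α*(2*α-3)*q^2/(9*t^2)))
        = (fun t : ℝ => (-(α*(2*α-3)*q^2/9))/t^2 + 0) from
        funext fun t => by ring, deriv_div2 _ _ _ hp]
    ring
  have hqd : pdq (I2 (fun _ _ p q => α * q^2 / p)) x u p q
      = -(2*α*(2*α-3)*q/(9*p^2)) := by
    unfold pdq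
    rw [deriv_congr (fun t => fI2 α hp x u t),
      show (fun t : ℝ => -(α*(2*α-3)*t^2/(9*p^2)))
        = (fun t : ℝ => (-(α*(2*α-3)/(9*p^2)))*t^2 + 0) from
        funext fun t => by ring, deriv_sq]
    ring
  simp only [Dhat, hx, hu, hpd, hqd]
  field_simp
  ring

lemma fI3 {p : ℝ} (hp : p ≠ 0) (x u q : ℝ) :
    I3 (fun _ _ p q => α * q^2 / p) x u p q
      = (2*α^3-9*α^2+9*α)*q^3/(27*p^3) := by
  have hupf : pdu (fun _ _ p q => α * q^2 / p : Fn) x u p q = 0 := by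
    simp only [pdu]
    exact deriv_const _ _
  simp only [I3]
  rw [fI1, fI2 α hp, hupf, dhatI2 α hp]
  field_simp
  ring

lemma fJ3 {p : ℝ} (hp : p ≠ 0) (hm3 : m^3 = 2*α^3-9*α^2+9*α) (x u q : ℝ) :
    J3 (fun _ _ p q => α * q^2 / p) x u p q = m*q/(3*p) := by
  simp only [J3]
  rw [fI3 α hp, show (2*α^3-9*α^2+9*α)*q^3/(27*p^3) = (m*q/(3*p))^3 by
    rw [← hm3]; field_simp; ring, cbrt_cube]

lemma fI4 {p : ℝ} (hp : p ≠ 0) (hm3 : m^3 = 2*α^3-9*α^2+9*α) (x u q : ℝ) :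
    I4 (fun _ _ p q => α * q^2 / p) x u p q = m/(3*p) := by
  simp only [I4, pdq]
  rw [deriv_congr (fun t => fJ3 α m hp hm3 x u t),
    show (fun t : ℝ => m*t/(3*p)) = (fun t : ℝ => (m/(3*p))*t + 0) from
      funext fun t => by ring, deriv_affine]

lemma pduJ3 {p : ℝ} (hp : p ≠ 0) (hm3 : m^3 = 2*α^3-9*α^2+9*α) (x u q : ℝ) :
    pdu (J3 (fun _ _ p q => α * q^2 / p)) x u p q = 0 := by
  unfold pdu
  rw [deriv_congr (fun t => fJ3 α m hp hm3 x t q)]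
  exact deriv_const _ _

lemma dhatJ3 {p : ℝ} (hp : p ≠ 0) (hm3 : m^3 = 2*α^3-9*α^2+9*α) (x u q : ℝ) :
    Dhat (fun _ _ p q => α * q^2 / p) (J3 (fun _ _ p q => α * q^2 / p)) x u p q
      = (α-1)*m*q^2/(3*p^2) := by
  have hx : pdx (J3 (fun _ _ p q => α * q^2 / p)) x u p q = 0 := by
    unfold pdx
    rw [deriv_congr (fun t => fJ3 α m hp hm3 t u q)]
    exact deriv_const _ _
  have hu := pduJ3 α m hp hm3 x u q
  have hpd : pdp (J3 (fun _ _ p q => α * q^2 / p)) x u p q = -(m*q/(3*p^2)) := by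
    unfold pdp
    rw [deriv_congr_ne hp (fun t ht => fJ3 α m ht hm3 x u q),
      show (fun t : ℝ => m*q/(3*t)) = (fun t : ℝ => (m*q/3)/t + 0) from
        funext fun t => by ring, deriv_div1 _ _ _ hp]
    ring
  have hqd : pdq (J3 (fun _ _ p q => α * q^2 / p)) x u p q = m/(3*p) :=
    fI4 α m hp hm3 x u q
  simp only [Dhat, hx, hu, hpd, hqd]
  field_simp
  ring

lemma fI5 {p q : ℝ} (hp : p ≠ 0) (hq : q ≠ 0) (hm3 : m^3 = 2*α^3-9*α^2+9*α)
    (hm0 : m ≠ 0) (x u : ℝ) :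
    I5 (fun _ _ p q => α * q^2 / p) x u p q = (α-3)/m := by
  simp only [I5]
  rw [fJ3 α m hp hm3, fI1, dhatJ3 α m hp hm3]
  field_simp
  ring

lemma fI7 {p q : ℝ} (hp : p ≠ 0) (hq : q ≠ 0) (hm3 : m^3 = 2*α^3-9*α^2+9*α)
    (hm0 : m ≠ 0) (x u : ℝ) :
    I7 (fun _ _ p q => α * q^2 / p) x u p q = 0 := by
  have hqd : pdq (I5 (fun _ _ p q => α * q^2 / p)) x u p q = 0 := by
    unfold pdq
    rw [deriv_congr_ne hq (fun t ht => fI5 α m hp ht hm3 hm0 x u)]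
    exact deriv_const _ _
  simp only [I7, hqd]
  ring

lemma dhatI5 {p q : ℝ} (hp : p ≠ 0) (hq : q ≠ 0) (hm3 : m^3 = 2*α^3-9*α^2+9*α)
    (hm0 : m ≠ 0) (x u : ℝ) :
    Dhat (fun _ _ p q => α * q^2 / p) (I5 (fun _ _ p q => α * q^2 / p)) x u p q
      = 0 := by
  have hx : pdx (I5 (fun _ _ p q => α * q^2 / p)) x u p q = 0 := by
    unfold pdx
    rw [deriv_congr (fun t => fI5 α m hp hq hm3 hm0 t u)]
    exact deriv_const _ _
  have hu : pdu (I5 (fun _ _ p q => α * q^2 / p)) x u p q = 0 := by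
    unfold pdu
    rw [deriv_congr (fun t => fI5 α m hp hq hm3 hm0 x t)]
    exact deriv_const _ _
  have hpd : pdp (I5 (fun _ _ p q => α * q^2 / p)) x u p q = 0 := by
    unfold pdp
    rw [deriv_congr_ne hp (fun t ht => fI5 α m ht hq hm3 hm0 x u)]
    exact deriv_const _ _
  have hqd : pdq (I5 (fun _ _ p q => α * q^2 / p)) x u p q = 0 := by
    unfold pdq
    rw [deriv_congr_ne hq (fun t ht => fI5 α m hp ht hm3 hm0 x u)]
    exact deriv_const _ _
  simp only [Dhat, hx, hu, hpd, hqd]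
  ring

lemma pdpI5 {p q : ℝ} (hp : p ≠ 0) (hq : q ≠ 0) (hm3 : m^3 = 2*α^3-9*α^2+9*α)
    (hm0 : m ≠ 0) (x u : ℝ) :
    pdp (I5 (fun _ _ p q => α * q^2 / p)) x u p q = 0 := by
  unfold pdp
  rw [deriv_congr_ne hp (fun t ht => fI5 α m ht hq hm3 hm0 x u)]
  exact deriv_const _ _

lemma fQ {p q : ℝ} (hp : p ≠ 0) (hq : q ≠ 0) (hm3 : m^3 = 2*α^3-9*α^2+9*α)
    (hm0 : m ≠ 0) (x u : ℝ) :
    Qinv (fun _ _ p q => α * q^2 / p) x u p q = 0 := by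
  simp only [Qinv]
  rw [fI7 α m hp hq hm3 hm0, pdpI5 α m hp hq hm3 hm0, pduJ3 α m hp hm3,
    dhatI5 α m hp hq hm3 hm0]
  simp

end invariants
set_option maxHeartbeats 4000000 in
/-- For `f(x,u,p,q) = α·q²/p` on `{p > 0, q ≠ 0}`, with
`α(α−3)(2α−3) ≠ 0`, `m` the real cube root of `2α³−9α²+9α` and `s = (3α²−9α+9)/m²`,
the explicit functions `a₁ = p^{α/3−1}`, `φ = −(m/3)ln p`,
`χ = ((αpx − αu + 3u)/m)p^{α/3−1}`, `ψ = (u − xp)p^{α/3−1}` solve the linear PDE systems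
(i)–(iii) of Proposition 4.1, with `η := D̂ₓχ/D̂ₓφ` and `f̄ := s·χ + ψ`. -/
theorem construction_example1 (α m s : ℝ)
    (hα : α * (α - 3) * (2*α - 3) ≠ 0)
    (hm : m = cbrt (2*α^3 - 9*α^2 + 9*α))
    (hs : s = (3*α^2 - 9*α + 9) / m^2)
    (f : Fn) (hfdef : f = fun _ _ p q => α * q^2 / p)
    (a1 : Fn3) (ha1 : a1 = fun _ _ p => p ^ (α/3 - 1))
    (φ : Fn3) (hφ : φ = fun _ _ p => -(m/3) * Real.log p)
    (χ : Fn3) (hχ : χ = fun x u p => ((α*p*x - α*u + 3*u) / m) * p ^ (α/3 - 1))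
    (ψ : Fn3) (hψ : ψ = fun x u p => (u - x*p) * p ^ (α/3 - 1))
    (η : Fn)
    (hη : η = fun x u p q => Dhat f (lift χ) x u p q / Dhat f (lift φ) x u p q)
    (fbar : Fn3) (hfbar : fbar = fun x u p => s * χ x u p + ψ x u p) :
    ∀ x u p q : ℝ, 0 < p → q ≠ 0 →
      -- (i)  a₁ solves the system (4.3)
      (Dhat f (lift a1) x u p q = J3 f x u p q * I5 f x u p q * a1 x u p ∧
       pdu3 a1 x u p = -(Qinv f x u p q) * a1 x u p ∧
       pdp3 a1 x u p
         = (I4 f x u p q * I5 f x u p q - I7 f x u p q / J3 f x u p q) * a1 x u p ∧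
       pdq (lift a1) x u p q = 0) ∧
      -- (ii)  φ solves the system (4.4)
      (Dhat f (lift φ) x u p q = -(J3 f x u p q) ∧
       pdu3 φ x u p = -(I7 f x u p q) ∧
       pdp3 φ x u p = -(I4 f x u p q)) ∧
      -- (iii)  η, χ, ψ solve the system (4.5)
      (Dhat f η x u p q = -(J3 f x u p q) * fbar x u p ∧
       pdu η x u p q
         = ((s + (I5 f x u p q)^2)/2 + I2 f x u p q / (2 * (J3 f x u p q)^2)) * a1 x u p
             - I7 f x u p q * fbar x u p ∧
       pdp η x u p q
         = (I5 f x u p q / J3 f x u p q + I1 f x u p q / (3 * (J3 f x u p q)^2)) * a1 x u p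
             - I4 f x u p q * fbar x u p ∧
       pdq η x u p q = a1 x u p / (J3 f x u p q)^2 ∧
       Dhat f (lift χ) x u p q = -(J3 f x u p q) * η x u p q ∧
       pdu3 χ x u p = -(I5 f x u p q) * a1 x u p - I7 f x u p q * η x u p q ∧
       pdp3 χ x u p = -(a1 x u p / J3 f x u p q) - I4 f x u p q * η x u p q ∧
       I7 f x u p q * Dhat f (lift ψ) x u p q
         = J3 f x u p q * (pdu3 ψ x u p - a1 x u p) ∧
       pdx3 ψ x u p = χ x u p * pdx3 φ x u p - p * a1 x u p ∧
       pdp3 ψ x u p = -(I4 f x u p q) * χ x u p) := by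
  intro x u p q hp hq
  have hp0 : p ≠ 0 := ne_of_gt hp
  have hm3 : m^3 = 2*α^3 - 9*α^2 + 9*α := by rw [hm]; exact cube_cbrt _
  have hM : (2*α^3 - 9*α^2 + 9*α) ≠ 0 := fun h0 => hα (by linear_combination h0)
  have hm0 : m ≠ 0 := by intro h; apply hM; rw [← hm3, h]; ring
  -- invariant values
  have hI1v : I1 f x u p q = -(2*α*q/p) := by rw [hfdef]; exact fI1 α x u p q
  have hI2v : I2 f x u p q = -(α*(2*α-3)*q^2/(9*p^2)) := by
    rw [hfdef]; exact fI2 α hp0 x u q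
  have hJv : J3 f x u p q = m*q/(3*p) := by rw [hfdef]; exact fJ3 α m hp0 hm3 x u q
  have hI4v : I4 f x u p q = m/(3*p) := by rw [hfdef]; exact fI4 α m hp0 hm3 x u q
  have hI5v : I5 f x u p q = (α-3)/m := by
    rw [hfdef]; exact fI5 α m hp0 hq hm3 hm0 x u
  have hI7v : I7 f x u p q = 0 := by rw [hfdef]; exact fI7 α m hp0 hq hm3 hm0 x u
  have hQv : Qinv f x u p q = 0 := by rw [hfdef]; exact fQ α m hp0 hq hm3 hm0 x u
  -- values of the explicit functions
  have ha1v : a1 x u p = p ^ (α/3-1) := by rw [ha1]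
  have hchiv : χ x u p = ((α*p*x - α*u + 3*u)/m) * p ^ (α/3-1) := by rw [hχ]
  have hpsiv : ψ x u p = (u - x*p) * p ^ (α/3-1) := by rw [hψ]
  have hfbarv : fbar x u p = s * χ x u p + ψ x u p := by rw [hfbar]
  -- derivatives of a1
  have ha1x : ∀ X U T : ℝ, pdx3 a1 X U T = 0 := by
    intro X U T; rw [ha1]; exact deriv_const _ _
  have ha1u : ∀ X U T : ℝ, pdu3 a1 X U T = 0 := by
    intro X U T; rw [ha1]; exact deriv_const _ _
  have ha1p : ∀ X U T : ℝ, T ≠ 0 → pdp3 a1 X U T = (α/3-1)*(T^(α/3-1)/T) := by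
    intro X U T hT; rw [ha1]
    show deriv (fun t : ℝ => t ^ (α/3-1)) T = _
    rw [(Real.hasDerivAt_rpow_const (p := α/3-1) (Or.inl hT)).deriv,
      Real.rpow_sub_one hT (α/3-1)]
  -- derivatives of φ
  have hphix : ∀ X U T : ℝ, pdx3 φ X U T = 0 := by
    intro X U T; rw [hφ]; exact deriv_const _ _
  have hphiu : ∀ X U T : ℝ, pdu3 φ X U T = 0 := by
    intro X U T; rw [hφ]; exact deriv_const _ _
  have hphip : ∀ X U T : ℝ, T ≠ 0 → pdp3 φ X U T = -(m/3)/T := by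
    intro X U T hT; rw [hφ]
    show deriv (fun t : ℝ => -(m/3) * Real.log t) T = _
    exact deriv_log' _ _ hT
  -- derivatives of χ
  have hchix : ∀ X U T : ℝ, pdx3 χ X U T = (α*T/m) * T^(α/3-1) := by
    intro X U T; rw [hχ]
    show deriv (fun t : ℝ => ((α*T*t - α*U + 3*U)/m) * T^(α/3-1)) X = _
    rw [show (fun t : ℝ => ((α*T*t - α*U + 3*U)/m) * T^(α/3-1))
        = (fun t : ℝ => ((α*T/m) * T^(α/3-1))*t + ((3*U-α*U)/m)*T^(α/3-1)) from
      funext fun t => by ring, deriv_affine]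
  have hchiu : ∀ X U T : ℝ, pdu3 χ X U T = ((3-α)/m) * T^(α/3-1) := by
    intro X U T; rw [hχ]
    show deriv (fun t : ℝ => ((α*T*X - α*t + 3*t)/m) * T^(α/3-1)) U = _
    rw [show (fun t : ℝ => ((α*T*X - α*t + 3*t)/m) * T^(α/3-1))
        = (fun t : ℝ => (((3-α)/m) * T^(α/3-1))*t + (α*T*X/m)*T^(α/3-1)) from
      funext fun t => by ring, deriv_affine]
  have hchip : ∀ X U T : ℝ, T ≠ 0 → pdp3 χ X U T
      = (α*X/m)*T^(α/3-1) + ((α*T*X - α*U + 3*U)/m)*((α/3-1)*(T^(α/3-1)/T)) := by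
    intro X U T hT; rw [hχ]
    show deriv (fun t : ℝ => ((α*t*X - α*U + 3*U)/m) * t^(α/3-1)) T = _
    rw [show (fun t : ℝ => ((α*t*X - α*U + 3*U)/m) * t^(α/3-1))
        = (fun t : ℝ => (0*t^2 + (α*X/m)*t + ((3*U-α*U)/m)) * t^(α/3-1)) from
      funext fun t => by ring, deriv_pq _ _ _ _ _ hT, Real.rpow_sub_one hT (α/3-1)]
    field_simp
    ring
  -- derivatives of ψ
  have hpsix : ∀ X U T : ℝ, pdx3 ψ X U T = -(T * T^(α/3-1)) := by
    intro X U T; rw [hψ]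
    show deriv (fun t : ℝ => (U - t*T) * T^(α/3-1)) X = _
    rw [show (fun t : ℝ => (U - t*T) * T^(α/3-1))
        = (fun t : ℝ => (-(T * T^(α/3-1)))*t + U*T^(α/3-1)) from
      funext fun t => by ring, deriv_affine]
  have hpsiu : ∀ X U T : ℝ, pdu3 ψ X U T = T^(α/3-1) := by
    intro X U T; rw [hψ]
    show deriv (fun t : ℝ => (t - X*T) * T^(α/3-1)) U = _
    rw [show (fun t : ℝ => (t - X*T) * T^(α/3-1))
        = (fun t : ℝ => (T^(α/3-1))*t + (-(X*T))*T^(α/3-1)) from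
      funext fun t => by ring, deriv_affine]
  have hpsip : ∀ X U T : ℝ, T ≠ 0 → pdp3 ψ X U T
      = -(X)*T^(α/3-1) + (U - X*T)*((α/3-1)*(T^(α/3-1)/T)) := by
    intro X U T hT; rw [hψ]
    show deriv (fun t : ℝ => (U - X*t) * t^(α/3-1)) T = _
    rw [show (fun t : ℝ => (U - X*t) * t^(α/3-1))
        = (fun t : ℝ => (0*t^2 + (-X)*t + U) * t^(α/3-1)) from
      funext fun t => by ring, deriv_pq _ _ _ _ _ hT, Real.rpow_sub_one hT (α/3-1)]
    field_simp
    ring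
  -- total derivatives of lifted functions
  have hDphi : ∀ X U T Q' : ℝ, T ≠ 0 → Dhat f (lift φ) X U T Q' = -(m*Q'/(3*T)) := by
    intro X U T Q' hT
    rw [Dhat_lift, hphix, hphiu, hphip _ _ _ hT]
    field_simp
    ring
  have hDchi : ∀ X U T Q' : ℝ, T ≠ 0 → Dhat f (lift χ) X U T Q'
      = (α*T/m)*T^(α/3-1) + T*(((3-α)/m)*T^(α/3-1))
        + Q'*((α*X/m)*T^(α/3-1)
          + ((α*T*X - α*U + 3*U)/m)*((α/3-1)*(T^(α/3-1)/T))) := by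
    intro X U T Q' hT
    rw [Dhat_lift, hchix, hchiu, hchip _ _ _ hT]
  -- closed form of η
  have hηall : ∀ X U T Q' : ℝ, 0 < T → Q' ≠ 0 → η X U T Q'
      = -(9*T^2*T^(α/3-1)/(m^2*Q'))
        - (T^(α/3-1)/m^2)*(α^2*X*T - (3-α)^2*U) := by
    intro X U T Q' hT hQ'
    rw [hη]
    show Dhat f (lift χ) X U T Q' / Dhat f (lift φ) X U T Q' = _
    rw [hDchi X U T Q' (ne_of_gt hT), hDphi X U T Q' (ne_of_gt hT)]
    field_simp
    ring
  have hetav := hηall x u p q hp hq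
  -- partial derivatives of η
  have hetax : pdx η x u p q = -(p^(α/3-1)/m^2)*(α^2*p) := by
    simp only [pdx]
    rw [deriv_congr (fun t => hηall t u p q hp hq),
      show (fun t : ℝ => -(9*p^2*p^(α/3-1)/(m^2*q))
          - (p^(α/3-1)/m^2)*(α^2*t*p - (3-α)^2*u))
        = (fun t : ℝ => (-(p^(α/3-1)/m^2)*(α^2*p))*t
            + (-(9*p^2*p^(α/3-1)/(m^2*q)) + (p^(α/3-1)/m^2)*((3-α)^2*u))) from
      funext fun t => by ring, deriv_affine]
  have hetau : pdu η x u p q = (p^(α/3-1)/m^2)*(3-α)^2 := by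
    simp only [pdu]
    rw [deriv_congr (fun t => hηall x t p q hp hq),
      show (fun t : ℝ => -(9*p^2*p^(α/3-1)/(m^2*q))
          - (p^(α/3-1)/m^2)*(α^2*x*p - (3-α)^2*t))
        = (fun t : ℝ => ((p^(α/3-1)/m^2)*(3-α)^2)*t
            + (-(9*p^2*p^(α/3-1)/(m^2*q)) - (p^(α/3-1)/m^2)*(α^2*x*p))) from
      funext fun t => by ring, deriv_affine]
  have hetap : pdp η x u p q
      = (2*(-9/(m^2*q))*p + (-(α^2*x/m^2)))*p^(α/3-1)
        + ((-9/(m^2*q))*p^2 + (-(α^2*x/m^2))*p + ((3-α)^2*u/m^2))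
          *((α/3-1)*(p^(α/3-1)/p)) := by
    simp only [pdp]
    rw [deriv_congr_pos hp (fun t ht => hηall x u t q ht hq),
      show (fun t : ℝ => -(9*t^2*t^(α/3-1)/(m^2*q))
          - (t^(α/3-1)/m^2)*(α^2*x*t - (3-α)^2*u))
        = (fun t : ℝ => ((-9/(m^2*q))*t^2 + (-(α^2*x/m^2))*t + ((3-α)^2*u/m^2))
            * t^(α/3-1)) from
      funext fun t => by ring, deriv_pq _ _ _ _ _ hp0, Real.rpow_sub_one hp0 (α/3-1)]
  have hetaq : pdq η x u p q = 9*p^2*p^(α/3-1)/(m^2*q^2) := by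
    simp only [pdq]
    rw [deriv_congr_ne hq (fun t ht => hηall x u p t hp ht),
      show (fun t : ℝ => -(9*p^2*p^(α/3-1)/(m^2*t))
          - (p^(α/3-1)/m^2)*(α^2*x*p - (3-α)^2*u))
        = (fun t : ℝ => (-(9*p^2*p^(α/3-1)/m^2))/t
            + (-((p^(α/3-1)/m^2)*(α^2*x*p - (3-α)^2*u)))) from
      funext fun t => by ring, deriv_div1 _ _ _ hq]
    ring
  refine ⟨⟨?_, ?_, ?_, ?_⟩, ⟨?_, ?_, ?_⟩,
    ?_, ?_, ?_, ?_, ?_, ?_, ?_, ?_, ?_, ?_⟩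
  · -- (i) Dhat a1
    rw [Dhat_lift, ha1x, ha1u, ha1p x u p hp0, hJv, hI5v, ha1v]
    field_simp
    ring
  · rw [ha1u, hQv, ha1v]; ring
  · rw [ha1p x u p hp0, hI4v, hI5v, hI7v, hJv, ha1v]
    field_simp
    ring
  · show deriv (fun _ : ℝ => a1 x u p) q = 0
    exact deriv_const _ _
  · -- (ii)
    rw [hDphi x u p q hp0, hJv]
  · rw [hphiu, hI7v]; ring
  · rw [hphip x u p hp0, hI4v]; ring
  · -- (iii) Dhat η
    simp only [Dhat]
    rw [hetax, hetau, hetap, hetaq, hJv, hfbarv, hchiv, hpsiv, hs]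
    simp only [hfdef]
    linear_combination (norm := (field_simp; ring1)) (p^(α/3-1)*q*(u - x*p)/(3*p*m^2)) * hm3
  · rw [hetau, hI5v, hI2v, hJv, hI7v, ha1v, hfbarv, hchiv, hpsiv, hs]
    field_simp
    ring
  · rw [hetap, hI5v, hI1v, hJv, ha1v, hI4v, hfbarv, hchiv, hpsiv, hs]
    linear_combination (norm := (field_simp; ring1)) (p^(α/3-1)*(u - x*p)/(3*p*m^2)) * hm3
  · rw [hetaq, ha1v, hJv]
    field_simp
    ring
  · rw [hDchi x u p q hp0, hJv, hetav]
    field_simp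
    ring
  · rw [hchiu, hI5v, hI7v, ha1v, hetav]
    field_simp
    ring
  · rw [hchip x u p hp0, ha1v, hJv, hI4v, hetav]
    field_simp
    ring
  · rw [hI7v, hJv, hpsiu, ha1v]
    ring
  · rw [hpsix, hphix, hchiv, ha1v]
    ring
  · rw [hpsip x u p hp0, hI4v, hchiv]
    field_simp
    ring

end
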